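/- arXiv:1706.03617 — 2 statements merged into one kernel-verified Lean document; each statement's English description precedes it below -/
import Mathlib

section
/- For every integer n > 1, pl̄(n) ≡ 2·∏_{p | n, p odd prime} (ord_p(n)+1) (mod 4), where the product is over odd primes dividing n and ord_p(n) is the p-adic valuation of n. Equivalently, pl̄(n) ≡ 2·d_odd(n) (mod 4) where d_odd(n) is the number of odd divisors of n. -/
open PowerSeries

/-- The formal power series `(1+q^k)/(1-q^k)` in `ℤ⟦q⟧`. -/
noncomputable def fps (k : ℕ) : PowerSeries ℤ :=
  (1 + (PowerSeries.X : PowerSeries ℤ) ^ k) *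
    PowerSeries.invOfUnit (1 - (PowerSeries.X : PowerSeries ℤ) ^ k) 1

/-- The number of overpartitions of `n`: the coefficient of `q^n` in
`∏_{k≥1} (1+q^k)/(1-q^k)`.  Since each factor with `k > n` contributes only `1`
to coefficients up to degree `n`, the product may be truncated at `k = n`. -/
noncomputable def pbar (n : ℕ) : ℤ :=
  PowerSeries.coeff n (∏ k ∈ Finset.Icc 1 n, fps k)

/-- The number of plane overpartitions of `n`: the coefficient of `q^n` in
`∏_{k≥1} ((1+q^k)/(1-q^k))^k`, truncated at `k = n` (factors with `k > n` do not
affect coefficients up to degree `n`). -/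
noncomputable def plbar (n : ℕ) : ℤ :=
  PowerSeries.coeff n (∏ k ∈ Finset.Icc 1 n, fps k ^ k)

/- ### Auxiliary material -/

/-- The number of odd divisors of `n` equals the product of `ord_p(n) + 1` over
odd primes `p` dividing `n`. -/
lemma card_odd_divisors (n : ℕ) (hn : n ≠ 0) :
    (n.divisors.filter (fun k => Odd k)).card
      = ∏ p ∈ n.primeFactors.filter (fun p => p ≠ 2), (n.factorization p + 1) := by
  set m := n / 2 ^ n.factorization 2 with hm
  have hm0 : m ≠ 0 := (Nat.ordCompl_pos 2 hn).ne'
  have hfilter : n.divisors.filter (fun k => Odd k) = m.divisors := by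
    ext k
    simp only [Finset.mem_filter, Nat.mem_divisors]
    constructor
    · rintro ⟨⟨hkn, -⟩, hodd⟩
      refine ⟨?_, hm0⟩
      have hcop : k.Coprime (2 ^ n.factorization 2) :=
        (Nat.coprime_two_right.mpr hodd).pow_right _
      have := Nat.ordProj_mul_ordCompl_eq_self n 2
      exact hcop.dvd_of_dvd_mul_left (by rwa [this])
    · rintro ⟨hkm, -⟩
      have hmn : m ∣ n := Nat.ordCompl_dvd n 2
      refine ⟨⟨hkm.trans hmn, hn⟩, ?_⟩
      rcases Nat.even_or_odd k with he | ho
      · exact absurd (dvd_trans he.two_dvd hkm) (Nat.not_dvd_ordCompl Nat.prime_two hn)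
      · exact ho
  rw [hfilter, Nat.card_divisors hm0]
  have hfac : m.factorization = n.factorization.erase 2 := Nat.factorization_ordCompl n 2
  have hpf : m.primeFactors = n.primeFactors.erase 2 := by
    rw [← Nat.support_factorization, hfac, Finsupp.support_erase, Nat.support_factorization]
  rw [hpf, Finset.filter_ne']
  refine Finset.prod_congr rfl fun p hp => ?_
  have hp2 : p ≠ 2 := (Finset.mem_erase.mp hp).1
  rw [hfac, Finsupp.erase_ne hp2]

lemma four_eq_zero : (4 : PowerSeries (ZMod 4)) = 0 := by
  have h := map_ofNat (C : ZMod 4 →+* PowerSeries (ZMod 4)) 4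
  rw [← h, show ((4:ZMod 4) = 0) from rfl, map_zero]

/-- The geometric series `1/(1-q^k) = ∑_{k ∣ m} q^m` over `ZMod 4`. -/
noncomputable def G (k : ℕ) : PowerSeries (ZMod 4) :=
  PowerSeries.mk fun m => if k ∣ m then 1 else 0

lemma one_sub_mul_G (k : ℕ) (hk : k ≠ 0) :
    (1 - (X : PowerSeries (ZMod 4)) ^ k) * G k = 1 := by
  ext m
  rw [sub_mul, one_mul, map_sub]
  rcases Nat.eq_zero_or_pos m with rfl | hm
  · simp [G, coeff_zero_eq_constantCoeff, hk]
  · rw [PowerSeries.coeff_X_pow_mul']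
    simp only [G, coeff_mk, coeff_one, hm.ne', if_false]
    by_cases hkm : k ∣ m
    · have hle : k ≤ m := Nat.le_of_dvd hm hkm
      have : k ∣ m - k := (Nat.dvd_sub hkm dvd_rfl)
      simp [hkm, hle, this]
    · have h2 : ¬ (k ≤ m ∧ k ∣ m - k) := by
        rintro ⟨hle, hd⟩
        exact hkm (by simpa [Nat.sub_add_cancel hle] using Nat.dvd_add hd (dvd_refl k))
      simp [hkm]
      intro hle
      exact fun hd => absurd (show k ∣ m by rw [show m = k by omega]) hkm

lemma isUnit_one_sub_X_pow (k : ℕ) (hk : k ≠ 0) :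
    IsUnit (1 - (X : PowerSeries (ZMod 4)) ^ k) :=
  IsUnit.of_mul_eq_one _ (one_sub_mul_G k hk)

lemma fps_mul_one_sub (k : ℕ) (hk : k ≠ 0) :
    fps k * (1 - (X : PowerSeries ℤ) ^ k) = 1 + X ^ k := by
  have hc : constantCoeff (1 - (X : PowerSeries ℤ) ^ k) = ((1 : ℤˣ) : ℤ) := by
    simp [hk]
  rw [fps, mul_assoc, mul_comm (invOfUnit _ _), PowerSeries.mul_invOfUnit _ _ hc, mul_one]

lemma map_fps (k : ℕ) (hk : k ≠ 0) :
    PowerSeries.map (Int.castRingHom (ZMod 4)) (fps k)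
      = 1 + 2 * ((X : PowerSeries (ZMod 4)) ^ k * G k) := by
  apply (isUnit_one_sub_X_pow k hk).mul_right_cancel
  have h1 : PowerSeries.map (Int.castRingHom (ZMod 4)) (fps k) *
      (1 - (X : PowerSeries (ZMod 4)) ^ k) = 1 + X ^ k := by
    have := congrArg (PowerSeries.map (Int.castRingHom (ZMod 4))) (fps_mul_one_sub k hk)
    simpa using this
  rw [h1]
  linear_combination (2 * (X : PowerSeries (ZMod 4)) ^ k) * (one_sub_mul_G k hk)
    + ((X : PowerSeries (ZMod 4)) ^ k * (1 - G k + X ^ k * G k)) * four_eq_zero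

lemma pow_one_add_two_mul (h : PowerSeries (ZMod 4)) (k : ℕ) :
    (1 + 2 * h) ^ k = if Odd k then 1 + 2 * h else 1 := by
  have hsq : (1 + 2 * h) ^ 2 = 1 := by linear_combination (h + h ^ 2) * four_eq_zero
  conv_lhs => rw [← Nat.div_add_mod k 2, pow_add, pow_mul, hsq, one_pow, one_mul]
  by_cases hk : Odd k
  · rw [if_pos hk, Nat.odd_iff.mp hk, pow_one]
  · rw [if_neg hk, Nat.even_iff.mp (Nat.not_odd_iff_even.mp hk), pow_zero]

lemma prod_one_add_two_mul (s : Finset ℕ) (H : ℕ → PowerSeries (ZMod 4)) :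
    ∏ k ∈ s, (1 + 2 * H k) = 1 + 2 * ∑ k ∈ s, H k := by
  induction s using Finset.induction_on with
  | empty => simp
  | @insert a s ha ih =>
    rw [Finset.prod_insert ha, ih, Finset.sum_insert ha]
    linear_combination (H a * ∑ k ∈ s, H k) * four_eq_zero

/-- For `n > 1`, `pl̄(n) ≡ 2·∏_{p∣n, p odd prime} (ord_p(n)+1) (mod 4)`,
the product over odd primes dividing `n`; this product equals the number of odd
divisors of `n`. -/
theorem plbar_congr_odd_divisor_product (n : ℕ) (hn : 1 < n) :
    plbar n ≡
      2 * ∏ p ∈ n.primeFactors.filter (fun p => p ≠ 2), ((n.factorization p : ℤ) + 1)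
      [ZMOD 4] := by
  have hn0 : n ≠ 0 := by omega
  refine (ZMod.intCast_eq_intCast_iff _ _ 4).mp ?_
  have hmap : ((plbar n : ℤ) : ZMod 4)
      = PowerSeries.coeff n (∏ k ∈ Finset.Icc 1 n,
          (1 + 2 * ((X : PowerSeries (ZMod 4)) ^ k * G k)) ^ k) := by
    have heq : ∏ k ∈ Finset.Icc 1 n, (1 + 2 * ((X : PowerSeries (ZMod 4)) ^ k * G k)) ^ k
        = PowerSeries.map (Int.castRingHom (ZMod 4)) (∏ k ∈ Finset.Icc 1 n, fps k ^ k) := by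
      rw [map_prod]
      refine Finset.prod_congr rfl fun k hk => ?_
      have hk0 : k ≠ 0 := by have := (Finset.mem_Icc.mp hk).1; omega
      rw [map_pow, map_fps k hk0]
    rw [plbar, heq, PowerSeries.coeff_map]
    rfl
  have hprod : ∏ k ∈ Finset.Icc 1 n, (1 + 2 * ((X : PowerSeries (ZMod 4)) ^ k * G k)) ^ k
      = 1 + 2 * ∑ k ∈ (Finset.Icc 1 n).filter (fun k => Odd k),
          (X : PowerSeries (ZMod 4)) ^ k * G k := by
    calc ∏ k ∈ Finset.Icc 1 n, (1 + 2 * ((X : PowerSeries (ZMod 4)) ^ k * G k)) ^ k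
        = ∏ k ∈ Finset.Icc 1 n,
            (if Odd k then 1 + 2 * ((X : PowerSeries (ZMod 4)) ^ k * G k) else 1) :=
          Finset.prod_congr rfl fun k _ => pow_one_add_two_mul _ k
      _ = ∏ k ∈ (Finset.Icc 1 n).filter (fun k => Odd k),
            (1 + 2 * ((X : PowerSeries (ZMod 4)) ^ k * G k)) := (Finset.prod_filter _ _).symm
      _ = _ := prod_one_add_two_mul _ _
  have hco : ∀ k ∈ (Finset.Icc 1 n).filter (fun k => Odd k),
      PowerSeries.coeff n ((X : PowerSeries (ZMod 4)) ^ k * G k)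
        = if k ∣ n then 1 else 0 := by
    intro k hk
    obtain ⟨hk1, hkn⟩ := Finset.mem_Icc.mp (Finset.mem_filter.mp hk).1
    rw [PowerSeries.coeff_X_pow_mul', if_pos hkn]
    simp only [G, coeff_mk]
    by_cases hd : k ∣ n
    · rw [if_pos (Nat.dvd_sub hd dvd_rfl), if_pos hd]
    · rw [if_neg, if_neg hd]
      intro hsub
      exact hd (by simpa [Nat.sub_add_cancel hkn] using Nat.dvd_add hsub (dvd_refl k))
  rw [hmap, hprod, two_mul, map_add, map_add, map_sum, PowerSeries.coeff_one, if_neg hn0,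
    Finset.sum_congr rfl hco, Finset.sum_boole]
  have hset : ((Finset.Icc 1 n).filter (fun k => Odd k)).filter (fun k => k ∣ n)
      = n.divisors.filter (fun k => Odd k) := by
    ext k
    simp only [Finset.mem_filter, Finset.mem_Icc, Nat.mem_divisors]
    constructor
    · rintro ⟨⟨⟨h1, h2⟩, ho⟩, hd⟩
      exact ⟨⟨hd, hn0⟩, ho⟩
    · rintro ⟨⟨hd, -⟩, ho⟩
      have hk0 : k ≠ 0 := by rintro rfl; exact hn0 (Nat.eq_zero_of_zero_dvd hd)
      exact ⟨⟨⟨Nat.one_le_iff_ne_zero.mpr hk0, Nat.le_of_dvd (by omega) hd⟩, ho⟩, hd⟩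
  rw [hset, card_odd_divisors n hn0]
  push_cast
  ring
end

section
/- The coefficient-wise congruence ∏_{n≥1} ((1+q^n)/(1-q^n))^n ≡ 1 + 2·∑_{m≥1} d_odd(m) q^m (mod 4) holds in ℤ[[q]], where d_odd(m) is the number of odd divisors of m. -/
open PowerSeries

/-- The number of positive odd divisors of `n`. -/
def doddcount (n : ℕ) : ℕ := (n.divisors.filter fun d => Odd d).card

/-- `∑_{j≥0, k ∣ j} q^j = 1/(1-q^k)`. -/
noncomputable def gser (k : ℕ) : PowerSeries ℤ :=
  PowerSeries.mk fun j => if k ∣ j then 1 else 0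

lemma one_sub_X_pow_mul_gser {k : ℕ} (hk : 1 ≤ k) :
    (1 - (PowerSeries.X : PowerSeries ℤ) ^ k) * gser k = 1 := by
  ext n
  rw [sub_mul, one_mul, map_sub, mul_comm ((PowerSeries.X : PowerSeries ℤ) ^ k),
    PowerSeries.coeff_mul_X_pow']
  simp only [gser, coeff_mk, coeff_one]
  by_cases hle : k ≤ n
  · have hdvd : k ∣ n ↔ k ∣ n - k := by
      constructor
      · intro h; exact (Nat.dvd_sub h dvd_rfl)
      · intro h
        have : n = n - k + k := (Nat.sub_add_cancel hle).symm
        rw [this]; exact Nat.dvd_add h dvd_rfl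
    have hn : n ≠ 0 := by omega
    rw [if_pos hle]; simp only [← hdvd]; simp [hn]
  · have hn : k ∣ n ↔ n = 0 := by
      constructor
      · intro h
        rcases Nat.eq_zero_or_pos n with h0 | h0
        · exact h0
        · exact absurd (Nat.le_of_dvd h0 h) hle
      · rintro rfl; exact dvd_zero k
    have hk0 : k ≠ 0 := by omega
    by_cases h0 : n = 0
    · subst h0
      simp [hle, hk0]
    · have hnd : ¬ k ∣ n := fun h => h0 (hn.mp h)
      simp [h0, hle, hnd]

lemma fps_eq {k : ℕ} (hk : 1 ≤ k) :
    fps k = 1 + 2 * ((PowerSeries.X : PowerSeries ℤ) ^ k * gser k) := by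
  have hconst : PowerSeries.constantCoeff (1 - (PowerSeries.X : PowerSeries ℤ) ^ k) = 1 := by
    simp [PowerSeries.constantCoeff_X, zero_pow (by omega : k ≠ 0)]
  have h1 : (1 - (PowerSeries.X : PowerSeries ℤ) ^ k) *
      PowerSeries.invOfUnit (1 - (PowerSeries.X : PowerSeries ℤ) ^ k) 1 = 1 :=
    PowerSeries.mul_invOfUnit _ 1 hconst
  have h2 := one_sub_X_pow_mul_gser hk
  have hinv : PowerSeries.invOfUnit (1 - (PowerSeries.X : PowerSeries ℤ) ^ k) 1 = gser k := by
    calc PowerSeries.invOfUnit (1 - (PowerSeries.X : PowerSeries ℤ) ^ k) 1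
        = ((1 - (PowerSeries.X : PowerSeries ℤ) ^ k) * gser k) *
            PowerSeries.invOfUnit (1 - (PowerSeries.X : PowerSeries ℤ) ^ k) 1 := by
          rw [h2, one_mul]
      _ = gser k * ((1 - (PowerSeries.X : PowerSeries ℤ) ^ k) *
            PowerSeries.invOfUnit (1 - (PowerSeries.X : PowerSeries ℤ) ^ k) 1) := by ring
      _ = gser k := by rw [h1, mul_one]
  rw [fps, hinv]
  linear_combination h2

lemma two_mul_two : (2 : PowerSeries (ZMod 4)) * 2 = 0 := by
  have h : (2 : PowerSeries (ZMod 4)) = PowerSeries.C 2 :=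
    (map_ofNat (PowerSeries.C (R := ZMod 4)) 2).symm
  rw [h, ← map_mul, show (2 : ZMod 4) * 2 = 0 by decide, map_zero]

lemma one_add_two_sq (a : PowerSeries (ZMod 4)) : (1 + 2 * a) ^ 2 = 1 := by
  linear_combination (a + a ^ 2) * two_mul_two

lemma one_add_two_pow (a : PowerSeries (ZMod 4)) (k : ℕ) :
    (1 + 2 * a) ^ k = if Odd k then 1 + 2 * a else 1 := by
  rcases Nat.even_or_odd k with he | ho
  · obtain ⟨j, rfl⟩ := he
    rw [if_neg (by simp [Nat.odd_iff, Nat.even_iff.mp ⟨j, rfl⟩])]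
    rw [show j + j = 2 * j by ring, pow_mul, one_add_two_sq, one_pow]
  · obtain ⟨j, rfl⟩ := ho
    rw [if_pos ⟨j, rfl⟩, pow_succ, pow_mul, one_add_two_sq, one_pow, one_mul]

lemma prod_one_add_two (s : Finset ℕ) (w : ℕ → PowerSeries (ZMod 4)) :
    ∏ k ∈ s, (1 + 2 * w k) = 1 + 2 * ∑ k ∈ s, w k := by
  induction s using Finset.cons_induction with
  | empty => simp
  | cons a s ha ih =>
    rw [Finset.prod_cons, Finset.sum_cons, ih]
    linear_combination (w a * ∑ k ∈ s, w k) * two_mul_two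

/-- `∏_{n≥1} ((1+q^n)/(1-q^n))^n ≡ 1 + 2·∑_{m≥1} d_odd(m)·q^m (mod 4)`
coefficient-wise, where `d_odd(m)` is the number of odd divisors of `m`. -/
theorem plbar_congr_two_doddcount (n : ℕ) :
    plbar n ≡ (if n = 0 then 1 else 2 * (doddcount n : ℤ)) [ZMOD 4] := by
  rcases eq_or_ne n 0 with rfl | hn
  · simp [plbar]
  rw [if_neg hn]
  have key : ((plbar n : ℤ) : ZMod 4) = ((2 * (doddcount n : ℤ) : ℤ) : ZMod 4) := by
    set φ := Int.castRingHom (ZMod 4) with hφ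
    have hcast : ((plbar n : ℤ) : ZMod 4) =
        PowerSeries.coeff n
          (PowerSeries.map φ (∏ k ∈ Finset.Icc 1 n, fps k ^ k)) := by
      rw [PowerSeries.coeff_map]; rfl
    rw [hcast]
    set w : ℕ → PowerSeries (ZMod 4) := fun k =>
      PowerSeries.map φ ((PowerSeries.X : PowerSeries ℤ) ^ k * gser k) with hw
    have hmap : PowerSeries.map φ (∏ k ∈ Finset.Icc 1 n, fps k ^ k) =
        ∏ k ∈ Finset.Icc 1 n, (if Odd k then 1 + 2 * w k else 1) := by
      rw [map_prod]
      refine Finset.prod_congr rfl fun k hk => ?_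
      have hk1 : 1 ≤ k := (Finset.mem_Icc.mp hk).1
      rw [map_pow, fps_eq hk1]
      have : PowerSeries.map φ (1 + 2 * ((PowerSeries.X : PowerSeries ℤ) ^ k * gser k)) =
          1 + 2 * w k := by
        simp [hw, map_ofNat]
      rw [this, one_add_two_pow]
    rw [hmap, Finset.prod_ite, Finset.prod_const_one, mul_one, prod_one_add_two]
    have hn' : PowerSeries.coeff n (1 : PowerSeries (ZMod 4)) = 0 := by
      simp [PowerSeries.coeff_one, hn]
    have hcoeff2 : PowerSeries.coeff n
        ((2 : PowerSeries (ZMod 4)) * ∑ k ∈ Finset.filter (fun k => Odd k) (Finset.Icc 1 n), w k) =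
        2 * PowerSeries.coeff n (∑ k ∈ Finset.filter (fun k => Odd k) (Finset.Icc 1 n), w k) := by
      rw [show (2 : PowerSeries (ZMod 4)) = PowerSeries.C 2 from
        (map_ofNat (PowerSeries.C (R := ZMod 4)) 2).symm, PowerSeries.coeff_C_mul]
    rw [map_add, hn', zero_add, hcoeff2, map_sum]
    have hterm : ∀ k ∈ Finset.filter (fun k => Odd k) (Finset.Icc 1 n),
        PowerSeries.coeff n (w k) = if k ∣ n then 1 else 0 := by
      intro k hk
      obtain ⟨hk', _⟩ := Finset.mem_filter.mp hk
      obtain ⟨hk1, hkn⟩ := Finset.mem_Icc.mp hk'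
      rw [hw]
      simp only [PowerSeries.coeff_map]
      rw [mul_comm, PowerSeries.coeff_mul_X_pow', if_pos hkn]
      have hdvd : k ∣ n ↔ k ∣ n - k := by
        constructor
        · intro h; exact Nat.dvd_sub h dvd_rfl
        · intro h; rw [show n = n - k + k from (Nat.sub_add_cancel hkn).symm]
          exact Nat.dvd_add h dvd_rfl
      simp only [gser, PowerSeries.coeff_mk, ← hdvd]
      split <;> simp
    rw [Finset.sum_congr rfl hterm]
    have hfilt : Finset.filter (fun k => k ∣ n)
        (Finset.filter (fun k => Odd k) (Finset.Icc 1 n)) =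
        Finset.filter (fun d => Odd d) (Nat.divisors n) := by
      ext d
      simp only [Finset.mem_filter, Finset.mem_Icc, Nat.mem_divisors]
      constructor
      · rintro ⟨⟨⟨h1, h2⟩, ho⟩, hd⟩
        exact ⟨⟨hd, hn⟩, ho⟩
      · rintro ⟨⟨hd, -⟩, ho⟩
        have hd0 : d ≠ 0 := by
          rintro rfl
          exact hn (Nat.eq_zero_of_zero_dvd hd)
        exact ⟨⟨⟨by omega, Nat.le_of_dvd (by omega) hd⟩, ho⟩, hd⟩
    rw [Finset.sum_boole, hfilt]
    have : ((2 * (doddcount n : ℤ) : ℤ) : ZMod 4) = 2 * ((doddcount n : ℕ) : ZMod 4) := by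
      push_cast; ring
    rw [this, doddcount]
  exact (ZMod.intCast_eq_intCast_iff _ _ _).mp key
end
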